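/- For any vector α ∈ ℝ³ with θ = ‖α‖ and â = α/θ, the matrix exponential exp(−i α·σ) equals I₂cos(θ) − i(â·σ)sin(θ), where σ denotes the triple of Pauli matrices. -/

import Mathlib

open Matrix

/-- The Pauli matrices `σ₁, σ₂, σ₃`. -/
noncomputable def pauli : Fin 3 → Matrix (Fin 2) (Fin 2) ℂ :=
  ![!![1, 0; 0, -1], !![0, 1; 1, 0], !![0, -Complex.I; Complex.I, 0]]

/-- `v·σ = v₁σ₁ + v₂σ₂ + v₃σ₃` for a real vector `v`. -/
noncomputable def pdot (v : Fin 3 → ℝ) : Matrix (Fin 2) (Fin 2) ℂ :=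
  (v 0 : ℂ) • pauli 0 + (v 1 : ℂ) • pauli 1 + (v 2 : ℂ) • pauli 2

/-- Euclidean norm of a vector in ℝ³. -/
noncomputable def nrm3 (α : Fin 3 → ℝ) : ℝ := Real.sqrt (α 0 ^ 2 + α 1 ^ 2 + α 2 ^ 2)

/-- `R(α) = cos(θ)I₂ − i sin(θ)(â·σ)` with `θ = ‖α‖`, `â = α/θ` (and `R(0) = I₂`,
since `α/0 = 0` by convention). -/
noncomputable def Rjones (α : Fin 3 → ℝ) : Matrix (Fin 2) (Fin 2) ℂ :=
  (Real.cos (nrm3 α) : ℂ) • 1 -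
    (Complex.I * Real.sin (nrm3 α)) • pdot (fun i => α i / nrm3 α)

lemma pdot_sq (v : Fin 3 → ℝ) :
    pdot v * pdot v = ((v 0 ^ 2 + v 1 ^ 2 + v 2 ^ 2 : ℝ) : ℂ) • 1 := by
  ext i j
  fin_cases i <;> fin_cases j <;>
    simp [pdot, pauli, Matrix.mul_apply, Fin.sum_univ_succ, Matrix.one_apply] <;>
    push_cast <;> ring_nf <;> simp [Complex.I_sq] <;> ring_nf

lemma pdot_smul (c : ℝ) (w : Fin 3 → ℝ) :
    pdot (fun i => c * w i) = (c : ℂ) • pdot w := by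
  ext i j
  fin_cases i <;> fin_cases j <;>
    simp [pdot, pauli, Matrix.smul_apply] <;> push_cast <;> ring

noncomputable def phiA (A : Matrix (Fin 2) (Fin 2) ℂ) (hA : A * A = 1) :
    (ℂ × ℂ) →ₐ[ℂ] Matrix (Fin 2) (Fin 2) ℂ where
  toFun p := ((p.1 + p.2) / 2) • 1 + ((p.1 - p.2) / 2) • A
  map_one' := by norm_num
  map_mul' p q := by
    simp only [Prod.fst_mul, Prod.snd_mul, add_mul, mul_add, smul_smul,
      smul_mul_assoc, mul_smul_comm, one_mul, mul_one, hA]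
    module
  map_zero' := by norm_num
  map_add' p q := by
    simp only [Prod.fst_add, Prod.snd_add]
    module
  commutes' c := by
    simp [Algebra.algebraMap_eq_smul_one]

/-- The matrix exponential `exp(−i α·σ)` equals `I₂cos(θ) − i(â·σ)sin(θ)`,
where `θ = ‖α‖` and `â = α/θ`. -/
theorem exp_pauli (α : Fin 3 → ℝ) :
    NormedSpace.exp (-(Complex.I • pdot α)) =
      (Real.cos (nrm3 α) : ℂ) • 1 -
        (Complex.I * Real.sin (nrm3 α)) • pdot (fun i => α i / nrm3 α) := by
  set θ := nrm3 α with hθdef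
  by_cases hθ : θ = 0
  · have hS : α 0 ^ 2 + α 1 ^ 2 + α 2 ^ 2 = 0 := by
      have h : α 0 ^ 2 + α 1 ^ 2 + α 2 ^ 2 ≤ 0 := Real.sqrt_eq_zero'.mp hθ
      nlinarith [sq_nonneg (α 0), sq_nonneg (α 1), sq_nonneg (α 2)]
    have h0 : α 0 = 0 := by nlinarith [sq_nonneg (α 0), sq_nonneg (α 1), sq_nonneg (α 2)]
    have h1 : α 1 = 0 := by nlinarith [sq_nonneg (α 0), sq_nonneg (α 1), sq_nonneg (α 2)]
    have h2 : α 2 = 0 := by nlinarith [sq_nonneg (α 0), sq_nonneg (α 1), sq_nonneg (α 2)]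
    have hα0 : pdot α = 0 := by
      ext i j; fin_cases i <;> fin_cases j <;> simp [pdot, pauli, h0, h1, h2]
    rw [hα0, hθ]
    simp [NormedSpace.exp_zero]
  · have hSnn : (0:ℝ) ≤ α 0 ^ 2 + α 1 ^ 2 + α 2 ^ 2 := by positivity
    have hθsq : θ ^ 2 = α 0 ^ 2 + α 1 ^ 2 + α 2 ^ 2 := Real.sq_sqrt hSnn
    set A := pdot (fun i => α i / θ) with hAdef
    have hA : A * A = 1 := by
      rw [hAdef, pdot_sq]
      have : (α 0 / θ) ^ 2 + (α 1 / θ) ^ 2 + (α 2 / θ) ^ 2 = 1 := by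
        field_simp
        linarith [hθsq]
      rw [this]
      norm_num
    have hpdot : pdot α = (θ : ℂ) • A := by
      rw [hAdef, ← pdot_smul]
      congr 1
      ext i
      field_simp
    have hφval : -(Complex.I • pdot α) = phiA A hA (-(Complex.I * θ), Complex.I * θ) := by
      simp only [phiA, AlgHom.coe_mk, RingHom.coe_mk, MonoidHom.coe_mk, OneHom.coe_mk]
      rw [hpdot]
      simp only [smul_smul]
      ring_nf
      module
    rw [hφval]
    letI : SeminormedRing (Matrix (Fin 2) (Fin 2) ℂ) := Matrix.linftyOpSemiNormedRing
    letI : NormedRing (Matrix (Fin 2) (Fin 2) ℂ) := Matrix.linftyOpNormedRing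
    letI : NormedAlgebra ℂ (Matrix (Fin 2) (Fin 2) ℂ) := Matrix.linftyOpNormedAlgebra
    have hcont : Continuous (phiA A hA) := by
      simp only [phiA, AlgHom.coe_mk, RingHom.coe_mk, MonoidHom.coe_mk, OneHom.coe_mk]
      fun_prop
    erw [← NormedSpace.map_exp (phiA A hA) hcont]
    have hexp : NormedSpace.exp ((-(Complex.I * θ), Complex.I * θ) : ℂ × ℂ) =
        (Complex.exp (-(Complex.I * θ)), Complex.exp (Complex.I * θ)) := by
      ext
      · rw [Prod.fst_exp, ← Complex.exp_eq_exp_ℂ]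
      · rw [Prod.snd_exp, ← Complex.exp_eq_exp_ℂ]
    rw [hexp]
    simp only [phiA, AlgHom.coe_mk, RingHom.coe_mk, MonoidHom.coe_mk, OneHom.coe_mk]
    have hc : ((Complex.exp (-(Complex.I * θ)) + Complex.exp (Complex.I * θ)) / 2)
        = (Real.cos θ : ℂ) := by
      rw [Complex.ofReal_cos, Complex.cos]
      ring_nf
    have hs : ((Complex.exp (-(Complex.I * θ)) - Complex.exp (Complex.I * θ)) / 2)
        = -(Complex.I * Real.sin θ) := by
      rw [Complex.ofReal_sin, Complex.sin]
      ring_nf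
      rw [Complex.I_sq]
      ring
    rw [hc, hs]
    module
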